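/- Let ν ∈ (0,1], let E := diag(ν², 1), let β₀ > 0, and let B ∈ ℝ^{2×2} satisfy xᵀBx ≥ β₀²‖x‖² for all x ∈ ℝ². For α ∈ ℝ define ‖U‖²_{1,α} := ∫₀^∞ e^{2αx}(U'(x)·E U'(x) + U(x)·B U(x)) dx and ‖f‖²_{0,α} := ∫₀^∞ e^{2αx}‖f(x)‖² dx. Then there exists a constant C > 0, depending only on β₀ and B (in particular independent of β, ν, f, g), such that for every β ∈ [0, β₀), every f : (0,∞) → ℝ² with ‖f‖_{0,β} < ∞, every g ∈ ℝ², and every twice continuously differentiable U : [0,∞) → ℝ² with −E U''(x) + B U(x) = f(x) for all x > 0, U(0) = g, and ‖U‖_{1,β} < ∞, one has ‖U‖_{1,β} ≤ C·(β₀ − β)^{-1}·(‖f‖_{0,β} + ‖g‖). -/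

import Mathlib

open Matrix Set MeasureTheory

/-- The diagonal matrix `E = diag(ν², 1)`. -/
noncomputable def Emat (ν : ℝ) : Matrix (Fin 2) (Fin 2) ℝ := !![ν ^ 2, 0; 0, 1]

/-- The squared exponentially weighted norm
`‖W‖²_{1,α} = ∫₀^∞ e^{2αx}(W'·EW' + W·BW) dx` on the half line. -/
noncomputable def wnormSq (ν : ℝ) (B : Matrix (Fin 2) (Fin 2) ℝ) (α : ℝ)
    (W W' : ℝ → Fin 2 → ℝ) : ℝ :=
  ∫ x in Ioi (0:ℝ),
    Real.exp (2 * α * x) * (W' x ⬝ᵥ (Emat ν *ᵥ W' x) + W x ⬝ᵥ (B *ᵥ W x))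

lemma dot2 (a b : Fin 2 → ℝ) : a ⬝ᵥ b = a 0 * b 0 + a 1 * b 1 := by
  simp [dotProduct, Fin.sum_univ_two]

lemma dotM (M : Matrix (Fin 2) (Fin 2) ℝ) (a b : Fin 2 → ℝ) :
    a ⬝ᵥ (M *ᵥ b) = a 0 * (M 0 0 * b 0 + M 0 1 * b 1) + a 1 * (M 1 0 * b 0 + M 1 1 * b 1) := by
  simp [dotProduct, Matrix.mulVec, Fin.sum_univ_two]

lemma dotE (ν : ℝ) (a b : Fin 2 → ℝ) :
    a ⬝ᵥ (Emat ν *ᵥ b) = ν ^ 2 * (a 0 * b 0) + a 1 * b 1 := by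
  rw [dotM]; simp [Emat]; ring

lemma quad_sub_le (M : Matrix (Fin 2) (Fin 2) ℝ)
    (hpos : ∀ z : Fin 2 → ℝ, 0 ≤ z ⬝ᵥ (M *ᵥ z)) (x y : Fin 2 → ℝ) :
    (x - y) ⬝ᵥ (M *ᵥ (x - y)) ≤ 2 * (x ⬝ᵥ (M *ᵥ x)) + 2 * (y ⬝ᵥ (M *ᵥ y)) := by
  have h := hpos (x + y)
  simp only [dotM, Pi.add_apply, Pi.sub_apply] at *
  nlinarith [h]

lemma quad_add_le (M : Matrix (Fin 2) (Fin 2) ℝ)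
    (hpos : ∀ z : Fin 2 → ℝ, 0 ≤ z ⬝ᵥ (M *ᵥ z)) (x y : Fin 2 → ℝ) :
    (x + y) ⬝ᵥ (M *ᵥ (x + y)) ≤ 2 * (x ⬝ᵥ (M *ᵥ x)) + 2 * (y ⬝ᵥ (M *ᵥ y)) := by
  have h := hpos (x - y)
  simp only [dotM, Pi.add_apply, Pi.sub_apply] at *
  nlinarith [h]

lemma eCS (ν t : ℝ) (a b : Fin 2 → ℝ) :
    2 * t * (a ⬝ᵥ (Emat ν *ᵥ b)) ≤ t ^ 2 * (a ⬝ᵥ (Emat ν *ᵥ a)) + b ⬝ᵥ (Emat ν *ᵥ b) := by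
  simp only [dotE]
  nlinarith [mul_nonneg (sq_nonneg ν) (sq_nonneg (t * a 0 - b 0)), sq_nonneg (t * a 1 - b 1)]

lemma eNonneg (ν : ℝ) (a : Fin 2 → ℝ) : 0 ≤ a ⬝ᵥ (Emat ν *ᵥ a) := by
  rw [dotE]; nlinarith [mul_nonneg (sq_nonneg ν) (mul_self_nonneg (a 0)), mul_self_nonneg (a 1)]

lemma eLeId (ν : ℝ) (hν : ν ^ 2 ≤ 1) (a : Fin 2 → ℝ) : a ⬝ᵥ (Emat ν *ᵥ a) ≤ a ⬝ᵥ a := by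
  rw [dotE, dot2]; nlinarith [sq_nonneg (a 0)]

lemma dotnn (a : Fin 2 → ℝ) : 0 ≤ a ⬝ᵥ a := by
  rw [dot2]; nlinarith [mul_self_nonneg (a 0), mul_self_nonneg (a 1)]

lemma dot_add_le (a b : Fin 2 → ℝ) :
    (a + b) ⬝ᵥ (a + b) ≤ 2 * (a ⬝ᵥ a) + 2 * (b ⬝ᵥ b) := by
  simp only [dot2, Pi.add_apply]
  nlinarith [sq_nonneg (a 0 - b 0), sq_nonneg (a 1 - b 1)]

lemma freq_small {h : ℝ → ℝ} (hi : IntegrableOn h (Ioi 0)) {ε : ℝ} (hε : 0 < ε) :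
    ∃ᶠ R in Filter.atTop, h R < ε := by
  by_contra hc
  rw [Filter.not_frequently] at hc
  simp only [not_lt] at hc
  obtain ⟨M, hM⟩ := Filter.eventually_atTop.1 hc
  set M' := max M 0 with hM'
  have hsub : Ioi M' ⊆ Ioi 0 := fun x hx => lt_of_le_of_lt (le_max_right M 0) hx
  have hi' : IntegrableOn h (Ioi M') := hi.mono_set hsub
  have hconst : Integrable (fun _ : ℝ => ε) (volume.restrict (Ioi M')) := by
    refine hi'.mono' aestronglyMeasurable_const ?_
    filter_upwards [ae_restrict_mem measurableSet_Ioi] with x hx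
    rw [Real.norm_eq_abs, abs_of_pos hε]
    exact hM x (le_of_lt (lt_of_le_of_lt (le_max_left M 0) hx))
  rcases integrable_const_iff.1 hconst with h0 | hfin
  · exact hε.ne' h0
  · have hfin := hfin.measure_univ_lt_top
    rw [Measure.restrict_apply_univ, Real.volume_Ioi] at hfin
    exact (lt_irrefl _ hfin).elim

lemma sqrt_add_le' {x y : ℝ} (hx : 0 ≤ x) (hy : 0 ≤ y) :
    Real.sqrt (x + y) ≤ Real.sqrt x + Real.sqrt y := by
  have h : x + y ≤ (Real.sqrt x + Real.sqrt y) ^ 2 := by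
    have hx' := Real.sq_sqrt hx
    have hy' := Real.sq_sqrt hy
    nlinarith [mul_nonneg (Real.sqrt_nonneg x) (Real.sqrt_nonneg y)]
  calc Real.sqrt (x + y) ≤ Real.sqrt ((Real.sqrt x + Real.sqrt y) ^ 2) := Real.sqrt_le_sqrt h
    _ = Real.sqrt x + Real.sqrt y := Real.sqrt_sq (by positivity)

lemma contOn_dot {f g : ℝ → Fin 2 → ℝ} {s : Set ℝ} (hf : ContinuousOn f s)
    (hg : ContinuousOn g s) : ContinuousOn (fun x => f x ⬝ᵥ g x) s := by
  have h : Continuous fun p : (Fin 2 → ℝ) × (Fin 2 → ℝ) => p.1 ⬝ᵥ p.2 :=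
    continuous_fst.dotProduct continuous_snd
  exact h.comp_continuousOn (hf.prodMk hg)

lemma contOn_mulVec {g : ℝ → Fin 2 → ℝ} {s : Set ℝ} (M : Matrix (Fin 2) (Fin 2) ℝ)
    (hg : ContinuousOn g s) : ContinuousOn (fun x => M *ᵥ g x) s := by
  have h : Continuous fun w : Fin 2 → ℝ => M *ᵥ w :=
    (continuous_const : Continuous fun _ : Fin 2 → ℝ => M).matrix_mulVec continuous_id
  exact h.comp_continuousOn hg

lemma mul_le_halfsq (b u v : ℝ) : b * (u * v) ≤ |b| * (u ^ 2 + v ^ 2) / 2 := by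
  have h1 : b * (u * v) ≤ |b * (u * v)| := le_abs_self _
  have h2 : |b * (u * v)| = |b| * |u * v| := abs_mul _ _
  have h3 : |u * v| ≤ (u ^ 2 + v ^ 2) / 2 := by
    rw [abs_mul]
    nlinarith [sq_nonneg (|u| - |v|), sq_abs u, sq_abs v]
  nlinarith [mul_le_mul_of_nonneg_left h3 (abs_nonneg b)]

lemma exp_int_le {c : ℝ} (hc : c ≤ -1) : ∫ x in Ioi (0:ℝ), Real.exp (c * x) ≤ 1 := by
  have hint : IntegrableOn (fun x => Real.exp (c * x)) (Ioi (0:ℝ)) := by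
    have := exp_neg_integrableOn_Ioi (0:ℝ) (show (0:ℝ) < -c by linarith)
    simpa using this
  have hint2 : IntegrableOn (fun x => Real.exp (-x)) (Ioi (0:ℝ)) := by
    simpa using exp_neg_integrableOn_Ioi (0:ℝ) one_pos
  calc ∫ x in Ioi (0:ℝ), Real.exp (c * x)
      ≤ ∫ x in Ioi (0:ℝ), Real.exp (-x) := by
        refine setIntegral_mono_on hint hint2 measurableSet_Ioi fun x hx => ?_
        exact Real.exp_le_exp.2 (by nlinarith [le_of_lt (mem_Ioi.1 hx)])
    _ = 1 := integral_exp_neg_Ioi_zero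

lemma exp_integrable {c : ℝ} (hc : c < 0) : IntegrableOn (fun x => Real.exp (c * x)) (Ioi (0:ℝ)) := by
  have := exp_neg_integrableOn_Ioi (0:ℝ) (show (0:ℝ) < -c by linarith)
  simpa using this
lemma key_pointwise (β₀ β ν : ℝ) (hβ0 : 0 < β₀) (hβ : 0 ≤ β) (hd : β < β₀) (hν2 : ν ^ 2 ≤ 1)
    (B : Matrix (Fin 2) (Fin 2) ℝ) (hB : ∀ x : Fin 2 → ℝ, β₀ ^ 2 * (x ⬝ᵥ x) ≤ x ⬝ᵥ (B *ᵥ x))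
    (a b c : Fin 2 → ℝ) :
    2 * β₀ * (β₀ - β) * (a ⬝ᵥ c - 2 * β * (a ⬝ᵥ (Emat ν *ᵥ b))) ≤
      (β₀ - β) * (β₀ + β) * (b ⬝ᵥ (Emat ν *ᵥ b) + a ⬝ᵥ (B *ᵥ a)) + c ⬝ᵥ c := by
  have hBa := hB a
  have hbEb := eNonneg ν b
  have haEale := eLeId ν hν2 a
  have hs : 0 < β₀ - β := by linarith
  have haBann : 0 ≤ a ⬝ᵥ (B *ᵥ a) := le_trans (mul_nonneg (sq_nonneg β₀) (dotnn a)) hBa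
  have h1 : 2 * (β₀ * (β₀ - β)) * (a ⬝ᵥ c) ≤ (β₀ * (β₀ - β)) ^ 2 * (a ⬝ᵥ a) + c ⬝ᵥ c := by
    simp only [dot2]
    nlinarith [sq_nonneg (β₀ * (β₀ - β) * a 0 - c 0), sq_nonneg (β₀ * (β₀ - β) * a 1 - c 1)]
  have h3' : -(2 * β₀ * (a ⬝ᵥ (Emat ν *ᵥ b))) ≤ β₀ ^ 2 * (a ⬝ᵥ (Emat ν *ᵥ a)) + b ⬝ᵥ (Emat ν *ᵥ b) := by
    simp only [dotE]
    nlinarith [mul_nonneg (sq_nonneg ν) (sq_nonneg (β₀ * a 0 + b 0)), sq_nonneg (β₀ * a 1 + b 1)]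
  have k1 : (β₀ - β) ^ 2 * (β₀ ^ 2 * (a ⬝ᵥ a)) ≤ (β₀ - β) ^ 2 * (a ⬝ᵥ (B *ᵥ a)) :=
    mul_le_mul_of_nonneg_left hBa (sq_nonneg _)
  have h2βs : 0 ≤ 2 * β * (β₀ - β) := by positivity
  have k2 : 2 * β * (β₀ - β) * (-(2 * β₀ * (a ⬝ᵥ (Emat ν *ᵥ b)))) ≤
      2 * β * (β₀ - β) * (β₀ ^ 2 * (a ⬝ᵥ (Emat ν *ᵥ a)) + b ⬝ᵥ (Emat ν *ᵥ b)) :=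
    mul_le_mul_of_nonneg_left h3' h2βs
  have k3 : β₀ ^ 2 * (a ⬝ᵥ (Emat ν *ᵥ a)) ≤ a ⬝ᵥ (B *ᵥ a) :=
    le_trans (mul_le_mul_of_nonneg_left haEale (sq_nonneg β₀)) hBa
  have k4 : 2 * β * (β₀ - β) * (β₀ ^ 2 * (a ⬝ᵥ (Emat ν *ᵥ a)) + b ⬝ᵥ (Emat ν *ᵥ b)) ≤
      2 * β * (β₀ - β) * (a ⬝ᵥ (B *ᵥ a) + b ⬝ᵥ (Emat ν *ᵥ b)) :=
    mul_le_mul_of_nonneg_left (by linarith) h2βs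
  nlinarith [mul_nonneg (mul_nonneg hs.le hs.le) hbEb, mul_nonneg hs.le hbEb,
    mul_nonneg h2βs hbEb, h1, k1, k2, k4]

lemma wdom {K c : ℝ} (hc : c ≤ -1) (hK : 0 ≤ K) {h : ℝ → ℝ}
    (hcont : ContinuousOn h (Ici 0)) (hnn : ∀ x, 0 ≤ h x)
    (hbd : ∀ x ∈ Ioi (0:ℝ), h x ≤ Real.exp (c * x) * K) :
    IntegrableOn h (Ioi 0) ∧ (∫ x in Ioi (0:ℝ), h x) ≤ K := by
  have hc0 : c < 0 := lt_of_le_of_lt hc (by norm_num)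
  have hdint : IntegrableOn (fun x => Real.exp (c * x) * K) (Ioi (0:ℝ)) :=
    (exp_integrable hc0).mul_const K
  have hmeas : AEStronglyMeasurable h (volume.restrict (Ioi (0:ℝ))) :=
    (hcont.mono Ioi_subset_Ici_self).aestronglyMeasurable measurableSet_Ioi
  have hint : IntegrableOn h (Ioi 0) := by
    refine hdint.mono' hmeas ?_
    filter_upwards [ae_restrict_mem measurableSet_Ioi] with x hx
    rw [Real.norm_eq_abs, abs_of_nonneg (hnn x)]
    exact hbd x hx
  refine ⟨hint, ?_⟩
  calc (∫ x in Ioi (0:ℝ), h x) ≤ ∫ x in Ioi (0:ℝ), Real.exp (c * x) * K :=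
        setIntegral_mono_on hint hdint measurableSet_Ioi hbd
    _ = (∫ x in Ioi (0:ℝ), Real.exp (c * x)) * K := by rw [integral_mul_const]
    _ ≤ 1 * K := mul_le_mul_of_nonneg_right (exp_int_le hc) hK
    _ = K := one_mul K
set_option maxHeartbeats 8000000 in
theorem stmt_14 (β₀ : ℝ) (hβ₀ : 0 < β₀)
    (B : Matrix (Fin 2) (Fin 2) ℝ)
    (hB : ∀ x : Fin 2 → ℝ, β₀ ^ 2 * (x ⬝ᵥ x) ≤ x ⬝ᵥ (B *ᵥ x)) :
    ∃ C : ℝ, 0 < C ∧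
      ∀ ν : ℝ, 0 < ν → ν ≤ 1 →
      ∀ β : ℝ, 0 ≤ β → β < β₀ →
      ∀ f : ℝ → Fin 2 → ℝ,
        IntegrableOn (fun x => Real.exp (2 * β * x) * (f x ⬝ᵥ f x)) (Ioi 0) →
      ∀ g : Fin 2 → ℝ,
      ∀ U U' U'' : ℝ → Fin 2 → ℝ,
        (∀ x : ℝ, 0 ≤ x → HasDerivAt U (U' x) x) →
        (∀ x : ℝ, 0 ≤ x → HasDerivAt U' (U'' x) x) →
        ContinuousOn U'' (Ici 0) →
        (∀ x : ℝ, 0 < x → -(Emat ν *ᵥ U'' x) + B *ᵥ U x = f x) →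
        U 0 = g →
        IntegrableOn (fun x => Real.exp (2 * β * x) *
          (U' x ⬝ᵥ (Emat ν *ᵥ U' x) + U x ⬝ᵥ (B *ᵥ U x))) (Ioi 0) →
        Real.sqrt (wnormSq ν B β U U') ≤
          C * (β₀ - β)⁻¹ *
            (Real.sqrt (∫ x in Ioi (0:ℝ), Real.exp (2 * β * x) * (f x ⬝ᵥ f x)) +
              Real.sqrt (g ⬝ᵥ g)) := by
  classical
  obtain ⟨Sb, hSbdef⟩ : ∃ t : ℝ, t = |B 0 0| + |B 0 1| + |B 1 0| + |B 1 1| := ⟨_, rfl⟩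
  have hSbnn : 0 ≤ Sb := by rw [hSbdef]; positivity
  obtain ⟨L, hLdef⟩ : ∃ t : ℝ, t = β₀ + 1 := ⟨_, rfl⟩
  have hL1 : 1 ≤ L := by rw [hLdef]; linarith
  obtain ⟨c₁, hc₁def⟩ : ∃ t : ℝ, t = L ^ 2 + Sb := ⟨_, rfl⟩
  have hc₁ : 0 < c₁ := by rw [hc₁def]; nlinarith
  obtain ⟨D, hDdef⟩ : ∃ t : ℝ, t = 4 + 16 * c₁ ^ 2 + 2 * β₀ ^ 2 * c₁ := ⟨_, rfl⟩
  have hD : 0 < D := by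
    rw [hDdef]; nlinarith [sq_nonneg c₁, mul_nonneg (sq_nonneg β₀) hc₁.le]
  refine ⟨Real.sqrt D, Real.sqrt_pos.2 hD, ?_⟩
  intro ν hν hν1 β hβ0 hβ f hf g U U' U'' hU hU' hU''c hequ hU0 hUint
  have hν2 : ν ^ 2 ≤ 1 := by nlinarith
  have hs : 0 < β₀ - β := by linarith
  have hBpos : ∀ z : Fin 2 → ℝ, 0 ≤ z ⬝ᵥ (B *ᵥ z) := fun z =>
    le_trans (mul_nonneg (sq_nonneg β₀) (dotnn z)) (hB z)
  have hBle : ∀ z : Fin 2 → ℝ, z ⬝ᵥ (B *ᵥ z) ≤ Sb * (z ⬝ᵥ z) := by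
    intro z
    rw [dotM, dot2, hSbdef]
    nlinarith [mul_le_halfsq (B 0 1) (z 0) (z 1), mul_le_halfsq (B 1 0) (z 0) (z 1),
      mul_le_mul_of_nonneg_right (le_abs_self (B 0 0)) (mul_self_nonneg (z 0)),
      mul_le_mul_of_nonneg_right (le_abs_self (B 1 1)) (mul_self_nonneg (z 1)),
      abs_nonneg (B 0 0), abs_nonneg (B 0 1), abs_nonneg (B 1 0), abs_nonneg (B 1 1),
      sq_nonneg (z 0), sq_nonneg (z 1)]
  -- the lifting G and the shifted function V
  obtain ⟨G, hGdef⟩ : ∃ G : ℝ → Fin 2 → ℝ, G = fun x => Real.exp (-L * x) • g := ⟨_, rfl⟩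
  obtain ⟨Gd, hGddef⟩ : ∃ t : ℝ → Fin 2 → ℝ, t = fun x => (-L * Real.exp (-L * x)) • g := ⟨_, rfl⟩
  obtain ⟨Gdd, hGdddef⟩ : ∃ t : ℝ → Fin 2 → ℝ, t = fun x => (L ^ 2 * Real.exp (-L * x)) • g :=
    ⟨_, rfl⟩
  have hes : ∀ x : ℝ, HasDerivAt (fun y => Real.exp (-L * y)) (-L * Real.exp (-L * x)) x := by
    intro x
    have h := ((hasDerivAt_id x).const_mul (-L)).exp
    simp only [id_eq] at h
    convert h using 1; ring
  have hGder : ∀ x : ℝ, HasDerivAt G (Gd x) x := by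
    intro x
    simp only [hGdef, hGddef]
    exact (hes x).smul_const g
  have hGdder : ∀ x : ℝ, HasDerivAt Gd (Gdd x) x := by
    intro x
    have h := (((hes x).const_mul (-L)).smul_const g)
    rw [show (-L * (-L * Real.exp (-L * x))) = L ^ 2 * Real.exp (-L * x) by ring] at h
    simp only [hGddef, hGdddef]
    exact h
  obtain ⟨V, hVdef⟩ : ∃ t : ℝ → Fin 2 → ℝ, t = fun x => U x - G x := ⟨_, rfl⟩
  obtain ⟨Vd, hVddef⟩ : ∃ t : ℝ → Fin 2 → ℝ, t = fun x => U' x - Gd x := ⟨_, rfl⟩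
  obtain ⟨Vdd, hVdddef⟩ : ∃ t : ℝ → Fin 2 → ℝ, t = fun x => U'' x - Gdd x := ⟨_, rfl⟩
  have hVder : ∀ x : ℝ, 0 ≤ x → HasDerivAt V (Vd x) x := by
    intro x hx
    simp only [hVdef, hVddef]
    exact (hU x hx).sub (hGder x)
  have hVdder : ∀ x : ℝ, 0 ≤ x → HasDerivAt Vd (Vdd x) x := by
    intro x hx
    simp only [hVddef, hVdddef]
    exact (hU' x hx).sub (hGdder x)
  have hV0 : V 0 = 0 := by
    simp only [hVdef, hGdef]
    simp [hU0]
  obtain ⟨ft, hftdef⟩ : ∃ t : ℝ → Fin 2 → ℝ, t = fun x => -(Emat ν *ᵥ Vdd x) + B *ᵥ V x :=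
    ⟨_, rfl⟩
  have hEVdd : ∀ x, Emat ν *ᵥ Vdd x = B *ᵥ V x - ft x := by
    intro x; simp only [hftdef]; abel
  -- continuity
  have hUc : ContinuousOn U (Ici 0) := fun x hx => (hU x hx).continuousAt.continuousWithinAt
  have hU'c : ContinuousOn U' (Ici 0) := fun x hx => (hU' x hx).continuousAt.continuousWithinAt
  have hVc : ContinuousOn V (Ici 0) := fun x hx => ((hVder x hx).continuousAt).continuousWithinAt
  have hVdc : ContinuousOn Vd (Ici 0) := fun x hx => ((hVdder x hx).continuousAt).continuousWithinAt
  have hGc : ContinuousOn G (Ici 0) := fun x hx => ((hGder x).continuousAt).continuousWithinAt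
  have hGdc : ContinuousOn Gd (Ici 0) := fun x hx => ((hGdder x).continuousAt).continuousWithinAt
  have hGddcont : Continuous Gdd := by
    rw [hGdddef]
    exact (continuous_const.mul (Real.continuous_exp.comp
      (continuous_const.mul continuous_id))).smul continuous_const
  have hVddc : ContinuousOn Vdd (Ici 0) := by
    rw [hVdddef]; exact hU''c.sub hGddcont.continuousOn
  have hftc : ContinuousOn ft (Ici 0) := by
    rw [hftdef]; exact ((contOn_mulVec _ hVddc).neg).add (contOn_mulVec _ hVc)
  have hwtc : Continuous (fun x : ℝ => Real.exp (2 * β * x)) :=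
    Real.continuous_exp.comp (continuous_const.mul continuous_id)
  -- integrand functions
  obtain ⟨AU, hAUdef⟩ : ∃ t : ℝ → ℝ, t = fun x => Real.exp (2 * β * x) *
    (U' x ⬝ᵥ (Emat ν *ᵥ U' x) + U x ⬝ᵥ (B *ᵥ U x)) := ⟨_, rfl⟩
  obtain ⟨AV, hAVdef⟩ : ∃ t : ℝ → ℝ, t = fun x => Real.exp (2 * β * x) *
    (Vd x ⬝ᵥ (Emat ν *ᵥ Vd x) + V x ⬝ᵥ (B *ᵥ V x)) := ⟨_, rfl⟩
  obtain ⟨AG, hAGdef⟩ : ∃ t : ℝ → ℝ, t = fun x => Real.exp (2 * β * x) *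
    (Gd x ⬝ᵥ (Emat ν *ᵥ Gd x) + G x ⬝ᵥ (B *ᵥ G x)) := ⟨_, rfl⟩
  obtain ⟨FT, hFTdef⟩ : ∃ t : ℝ → ℝ, t = fun x => Real.exp (2 * β * x) * (ft x ⬝ᵥ ft x) :=
    ⟨_, rfl⟩
  have hAUint : IntegrableOn AU (Ioi 0) := by rw [hAUdef]; exact hUint
  have hAVnn : ∀ x, 0 ≤ AV x := fun x => by
    simp only [hAVdef]
    exact mul_nonneg (Real.exp_pos _).le (add_nonneg (eNonneg _ _) (hBpos _))
  have hAUnn : ∀ x, 0 ≤ AU x := fun x => by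
    simp only [hAUdef]
    exact mul_nonneg (Real.exp_pos _).le (add_nonneg (eNonneg _ _) (hBpos _))
  have hAGnn : ∀ x, 0 ≤ AG x := fun x => by
    simp only [hAGdef]
    exact mul_nonneg (Real.exp_pos _).le (add_nonneg (eNonneg _ _) (hBpos _))
  have hFTnn : ∀ x, 0 ≤ FT x := fun x => by
    simp only [hFTdef]
    exact mul_nonneg (Real.exp_pos _).le (dotnn _)
  have hAVc : ContinuousOn AV (Ici 0) := by
    rw [hAVdef]
    exact hwtc.continuousOn.mul ((contOn_dot hVdc (contOn_mulVec _ hVdc)).add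
      (contOn_dot hVc (contOn_mulVec _ hVc)))
  have hAGc : ContinuousOn AG (Ici 0) := by
    rw [hAGdef]
    exact hwtc.continuousOn.mul ((contOn_dot hGdc (contOn_mulVec _ hGdc)).add
      (contOn_dot hGc (contOn_mulVec _ hGc)))
  have hFTc : ContinuousOn FT (Ici 0) := by
    rw [hFTdef]
    exact hwtc.continuousOn.mul (contOn_dot hftc hftc)
  -- bound for AG
  have hAGbd : ∀ x ∈ Ioi (0:ℝ), AG x ≤ Real.exp (-1 * x) * (c₁ * (g ⬝ᵥ g)) := by
    intro x hx
    have hx' : (0:ℝ) ≤ x := le_of_lt hx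
    have hGdot : G x ⬝ᵥ (B *ᵥ G x) = Real.exp (-L * x) ^ 2 * (g ⬝ᵥ (B *ᵥ g)) := by
      simp only [hGdef, Matrix.mulVec_smul, smul_dotProduct, dotProduct_smul, smul_eq_mul]
      ring
    have hGddot : Gd x ⬝ᵥ (Emat ν *ᵥ Gd x) =
        Real.exp (-L * x) ^ 2 * (L ^ 2 * (g ⬝ᵥ (Emat ν *ᵥ g))) := by
      simp only [hGddef, Matrix.mulVec_smul, smul_dotProduct, dotProduct_smul, smul_eq_mul]
      ring
    have hsum : Gd x ⬝ᵥ (Emat ν *ᵥ Gd x) + G x ⬝ᵥ (B *ᵥ G x) ≤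
        Real.exp (-L * x) ^ 2 * (c₁ * (g ⬝ᵥ g)) := by
      rw [hGdot, hGddot, hc₁def]
      have h1 : g ⬝ᵥ (Emat ν *ᵥ g) ≤ g ⬝ᵥ g := eLeId ν hν2 g
      have h2 : g ⬝ᵥ (B *ᵥ g) ≤ Sb * (g ⬝ᵥ g) := hBle g
      nlinarith [sq_nonneg (Real.exp (-L * x)), sq_nonneg L, dotnn g,
        mul_le_mul_of_nonneg_left h1 (sq_nonneg L), eNonneg ν g]
    have hexpb : Real.exp (2 * β * x) * Real.exp (-L * x) ^ 2 ≤ Real.exp (-1 * x) := by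
      rw [sq, ← Real.exp_add, ← Real.exp_add]
      refine Real.exp_le_exp.2 ?_
      rw [hLdef]
      nlinarith
    have h0 : (0:ℝ) ≤ Real.exp (2 * β * x) := (Real.exp_pos _).le
    calc AG x ≤ Real.exp (2 * β * x) * (Real.exp (-L * x) ^ 2 * (c₁ * (g ⬝ᵥ g))) := by
          simp only [hAGdef]; exact mul_le_mul_of_nonneg_left hsum h0
      _ = (Real.exp (2 * β * x) * Real.exp (-L * x) ^ 2) * (c₁ * (g ⬝ᵥ g)) := by ring
      _ ≤ Real.exp (-1 * x) * (c₁ * (g ⬝ᵥ g)) :=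
          mul_le_mul_of_nonneg_right hexpb (mul_nonneg hc₁.le (dotnn g))
  have hAG := wdom (le_refl (-1)) (mul_nonneg hc₁.le (dotnn g)) hAGc hAGnn hAGbd
  have hAGint : IntegrableOn AG (Ioi 0) := hAG.1
  have hAGle : (∫ x in Ioi (0:ℝ), AG x) ≤ c₁ * (g ⬝ᵥ g) := hAG.2
  -- AV is dominated by 2 AU + 2 AG
  have hAVle : ∀ x, AV x ≤ 2 * AU x + 2 * AG x := by
    intro x
    have h1 := quad_sub_le (Emat ν) (eNonneg ν) (U' x) (Gd x)
    have h2 := quad_sub_le B hBpos (U x) (G x)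
    have h0 : (0:ℝ) ≤ Real.exp (2 * β * x) := (Real.exp_pos _).le
    simp only [hAVdef, hAUdef, hAGdef, hVdef, hVddef]
    nlinarith [mul_le_mul_of_nonneg_left (add_le_add h1 h2) h0]
  have hAVint : IntegrableOn AV (Ioi 0) := by
    refine Integrable.mono' ((hAUint.const_mul 2).add (hAGint.const_mul 2)) ?_ ?_
    · exact (hAVc.mono Ioi_subset_Ici_self).aestronglyMeasurable measurableSet_Ioi
    · filter_upwards with x
      rw [Real.norm_eq_abs, abs_of_nonneg (hAVnn x)]
      exact hAVle x
  -- decompose ft = f₀ + exp(-Lx) • w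
  obtain ⟨w, hwdef⟩ : ∃ t : Fin 2 → ℝ, t = L ^ 2 • (Emat ν *ᵥ g) - B *ᵥ g := ⟨_, rfl⟩
  obtain ⟨f₀, hf₀def⟩ : ∃ t : ℝ → Fin 2 → ℝ, t = fun x => -(Emat ν *ᵥ U'' x) + B *ᵥ U x :=
    ⟨_, rfl⟩
  have hftsplit : ∀ x, ft x = f₀ x + Real.exp (-L * x) • w := by
    intro x
    simp only [hftdef, hf₀def, hVdddef, hVdef, hGdddef, hGdef, hwdef,
      Matrix.mulVec_sub, Matrix.mulVec_smul, smul_sub, smul_smul]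
    module
  have hww : w ⬝ᵥ w ≤ 4 * c₁ ^ 2 * (g ⬝ᵥ g) := by
    have hw0 : w 0 = L ^ 2 * ν ^ 2 * g 0 - (B 0 0 * g 0 + B 0 1 * g 1) := by
      simp only [hwdef, Pi.sub_apply, Pi.smul_apply, smul_eq_mul]
      simp [Emat, Matrix.mulVec, dotProduct, Fin.sum_univ_two]
      ring
    have hw1 : w 1 = L ^ 2 * g 1 - (B 1 0 * g 0 + B 1 1 * g 1) := by
      simp only [hwdef, Pi.sub_apply, Pi.smul_apply, smul_eq_mul]
      simp [Emat, Matrix.mulVec, dotProduct, Fin.sum_univ_two]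
    have habs0 : |w 0| ≤ c₁ * (|g 0| + |g 1|) := by
      rw [hw0, hc₁def, hSbdef]
      have t1 : |L ^ 2 * ν ^ 2 * g 0 - (B 0 0 * g 0 + B 0 1 * g 1)| ≤
          |L ^ 2 * ν ^ 2 * g 0| + |B 0 0 * g 0 + B 0 1 * g 1| := abs_sub _ _
      have t2 : |B 0 0 * g 0 + B 0 1 * g 1| ≤ |B 0 0| * |g 0| + |B 0 1| * |g 1| := by
        calc |B 0 0 * g 0 + B 0 1 * g 1| ≤ |B 0 0 * g 0| + |B 0 1 * g 1| := abs_add_le _ _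
          _ = |B 0 0| * |g 0| + |B 0 1| * |g 1| := by rw [abs_mul, abs_mul]
      have t3 : |L ^ 2 * ν ^ 2 * g 0| ≤ L ^ 2 * |g 0| := by
        rw [abs_mul]
        have h4 : |L ^ 2 * ν ^ 2| = L ^ 2 * ν ^ 2 := abs_of_nonneg (by positivity)
        rw [h4]
        nlinarith [mul_nonneg (sq_nonneg L) (mul_nonneg (sub_nonneg.2 hν2) (abs_nonneg (g 0)))]
      nlinarith [t1, t2, t3,
        mul_nonneg (abs_nonneg (B 1 0)) (abs_nonneg (g 0)),
        mul_nonneg (abs_nonneg (B 1 0)) (abs_nonneg (g 1)),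
        mul_nonneg (abs_nonneg (B 1 1)) (abs_nonneg (g 0)),
        mul_nonneg (abs_nonneg (B 1 1)) (abs_nonneg (g 1)),
        mul_nonneg (abs_nonneg (B 0 0)) (abs_nonneg (g 1)),
        mul_nonneg (abs_nonneg (B 0 1)) (abs_nonneg (g 0)),
        mul_nonneg (sq_nonneg L) (abs_nonneg (g 1))]
    have habs1 : |w 1| ≤ c₁ * (|g 0| + |g 1|) := by
      rw [hw1, hc₁def, hSbdef]
      have t1 : |L ^ 2 * g 1 - (B 1 0 * g 0 + B 1 1 * g 1)| ≤
          |L ^ 2 * g 1| + |B 1 0 * g 0 + B 1 1 * g 1| := abs_sub _ _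
      have t2 : |B 1 0 * g 0 + B 1 1 * g 1| ≤ |B 1 0| * |g 0| + |B 1 1| * |g 1| := by
        calc |B 1 0 * g 0 + B 1 1 * g 1| ≤ |B 1 0 * g 0| + |B 1 1 * g 1| := abs_add_le _ _
          _ = |B 1 0| * |g 0| + |B 1 1| * |g 1| := by rw [abs_mul, abs_mul]
      have t3 : |L ^ 2 * g 1| = L ^ 2 * |g 1| := by
        rw [abs_mul, abs_of_nonneg (sq_nonneg L)]
      nlinarith [t1, t2, t3,
        mul_nonneg (abs_nonneg (B 0 0)) (abs_nonneg (g 0)),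
        mul_nonneg (abs_nonneg (B 0 0)) (abs_nonneg (g 1)),
        mul_nonneg (abs_nonneg (B 0 1)) (abs_nonneg (g 0)),
        mul_nonneg (abs_nonneg (B 0 1)) (abs_nonneg (g 1)),
        mul_nonneg (abs_nonneg (B 1 0)) (abs_nonneg (g 1)),
        mul_nonneg (abs_nonneg (B 1 1)) (abs_nonneg (g 0)),
        mul_nonneg (sq_nonneg L) (abs_nonneg (g 0))]
    have hsq0 : w 0 ^ 2 ≤ (c₁ * (|g 0| + |g 1|)) ^ 2 := by
      rw [← sq_abs (w 0)]
      exact pow_le_pow_left₀ (abs_nonneg _) habs0 2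
    have hsq1 : w 1 ^ 2 ≤ (c₁ * (|g 0| + |g 1|)) ^ 2 := by
      rw [← sq_abs (w 1)]
      exact pow_le_pow_left₀ (abs_nonneg _) habs1 2
    rw [dot2, dot2]
    nlinarith [hsq0, hsq1, sq_nonneg (|g 0| - |g 1|), sq_abs (g 0), sq_abs (g 1),
      sq_nonneg c₁]
  -- integrability of FT and its bound
  have hf₀int : IntegrableOn (fun x => Real.exp (2 * β * x) * (f₀ x ⬝ᵥ f₀ x)) (Ioi 0) := by
    refine hf.congr_fun (fun x hx => ?_) measurableSet_Ioi
    simp only [hf₀def]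
    rw [hequ x hx]
  have hF2eq : (∫ x in Ioi (0:ℝ), Real.exp (2 * β * x) * (f x ⬝ᵥ f x)) =
      ∫ x in Ioi (0:ℝ), Real.exp (2 * β * x) * (f₀ x ⬝ᵥ f₀ x) := by
    refine setIntegral_congr_fun measurableSet_Ioi (fun x hx => ?_)
    simp only [hf₀def]
    rw [hequ x hx]
  obtain ⟨F2, hF2def⟩ : ∃ t : ℝ,
      t = ∫ x in Ioi (0:ℝ), Real.exp (2 * β * x) * (f x ⬝ᵥ f x) := ⟨_, rfl⟩
  have hF2nn : 0 ≤ F2 := by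
    rw [hF2def]
    exact setIntegral_nonneg measurableSet_Ioi
      (fun x _ => mul_nonneg (Real.exp_pos _).le (dotnn _))
  -- the exponential tail part of FT
  obtain ⟨HG, hHGdef⟩ : ∃ t : ℝ → ℝ, t = fun x => Real.exp (2 * β * x) *
    ((Real.exp (-L * x) • w) ⬝ᵥ (Real.exp (-L * x) • w)) := ⟨_, rfl⟩
  have hHGc : ContinuousOn HG (Ici 0) := by
    rw [hHGdef]
    have h5 : Continuous fun x : ℝ => Real.exp (-L * x) • w :=
      (Real.continuous_exp.comp (continuous_const.mul continuous_id)).smul continuous_const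
    exact hwtc.continuousOn.mul (contOn_dot h5.continuousOn h5.continuousOn)
  have hHGnn : ∀ x, 0 ≤ HG x := fun x => by
    simp only [hHGdef]; exact mul_nonneg (Real.exp_pos _).le (dotnn _)
  have hHGbd : ∀ x ∈ Ioi (0:ℝ), HG x ≤ Real.exp (-1 * x) * (4 * c₁ ^ 2 * (g ⬝ᵥ g)) := by
    intro x hx
    have hx' : (0:ℝ) ≤ x := le_of_lt hx
    have h1 : (Real.exp (-L * x) • w) ⬝ᵥ (Real.exp (-L * x) • w) =
        Real.exp (-L * x) ^ 2 * (w ⬝ᵥ w) := by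
      simp only [smul_dotProduct, dotProduct_smul, smul_eq_mul]; ring
    have hexpb : Real.exp (2 * β * x) * Real.exp (-L * x) ^ 2 ≤ Real.exp (-1 * x) := by
      rw [sq, ← Real.exp_add, ← Real.exp_add]
      refine Real.exp_le_exp.2 ?_
      rw [hLdef]
      nlinarith
    calc HG x = (Real.exp (2 * β * x) * Real.exp (-L * x) ^ 2) * (w ⬝ᵥ w) := by
          rw [hHGdef]; simp only []; rw [h1]; ring
      _ ≤ (Real.exp (2 * β * x) * Real.exp (-L * x) ^ 2) * (4 * c₁ ^ 2 * (g ⬝ᵥ g)) :=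
          mul_le_mul_of_nonneg_left hww (by positivity)
      _ ≤ Real.exp (-1 * x) * (4 * c₁ ^ 2 * (g ⬝ᵥ g)) := by
          refine mul_le_mul_of_nonneg_right hexpb ?_
          have := dotnn g
          positivity
  have hHG := wdom (le_refl (-1)) (by have := dotnn g; positivity) hHGc hHGnn hHGbd
  have hFTle2 : ∀ x, FT x ≤ 2 * (Real.exp (2 * β * x) * (f₀ x ⬝ᵥ f₀ x)) + 2 * HG x := by
    intro x
    have h1 := dot_add_le (f₀ x) (Real.exp (-L * x) • w)
    have h0 : (0:ℝ) ≤ Real.exp (2 * β * x) := (Real.exp_pos _).le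
    simp only [hFTdef, hHGdef, hftsplit x]
    nlinarith [mul_le_mul_of_nonneg_left h1 h0]
  have hFTint : IntegrableOn FT (Ioi 0) := by
    refine Integrable.mono' ((hf₀int.const_mul 2).add ((hHG.1).const_mul 2)) ?_ ?_
    · exact (hFTc.mono Ioi_subset_Ici_self).aestronglyMeasurable measurableSet_Ioi
    · filter_upwards with x
      rw [Real.norm_eq_abs, abs_of_nonneg (hFTnn x)]
      exact hFTle2 x
  have hFTInn : 0 ≤ ∫ x in Ioi (0:ℝ), FT x :=
    setIntegral_nonneg measurableSet_Ioi (fun x _ => hFTnn x)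
  have hFTI : (∫ x in Ioi (0:ℝ), FT x) ≤ 2 * F2 + 8 * c₁ ^ 2 * (g ⬝ᵥ g) := by
    have step : (∫ x in Ioi (0:ℝ), FT x) ≤
        ∫ x in Ioi (0:ℝ), (2 * (Real.exp (2 * β * x) * (f₀ x ⬝ᵥ f₀ x)) + 2 * HG x) :=
      setIntegral_mono_on hFTint ((hf₀int.const_mul 2).add ((hHG.1).const_mul 2))
        measurableSet_Ioi (fun x _ => hFTle2 x)
    have hsplit : (∫ x in Ioi (0:ℝ),
        (2 * (Real.exp (2 * β * x) * (f₀ x ⬝ᵥ f₀ x)) + 2 * HG x)) =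
        2 * (∫ x in Ioi (0:ℝ), Real.exp (2 * β * x) * (f₀ x ⬝ᵥ f₀ x)) +
        2 * (∫ x in Ioi (0:ℝ), HG x) := by
      rw [integral_add (hf₀int.const_mul 2) ((hHG.1).const_mul 2),
        integral_const_mul, integral_const_mul]
    rw [hsplit, ← hF2eq, ← hF2def] at step
    nlinarith [hHG.2, step]
  -- the boundary function Φ and the identity for its derivative
  obtain ⟨Φ, hΦdef⟩ : ∃ t : ℝ → ℝ,
      t = fun y => Real.exp (2 * β * y) * (V y ⬝ᵥ (Emat ν *ᵥ Vd y)) := ⟨_, rfl⟩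
  obtain ⟨RS, hRSdef⟩ : ∃ t : ℝ → ℝ, t = fun x => Real.exp (2 * β * x) *
      (2 * β * (V x ⬝ᵥ (Emat ν *ᵥ Vd x)) - V x ⬝ᵥ ft x) := ⟨_, rfl⟩
  obtain ⟨DR, hDRdef⟩ : ∃ t : ℝ → ℝ, t = fun x => AV x + RS x := ⟨_, rfl⟩
  have hwtder : ∀ x : ℝ,
      HasDerivAt (fun y => Real.exp (2 * β * y)) (2 * β * Real.exp (2 * β * x)) x := by
    intro x
    have h := ((hasDerivAt_id x).const_mul (2 * β)).exp
    simp only [id_eq] at h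
    convert h using 1; ring
  have hΦder : ∀ x : ℝ, 0 ≤ x → HasDerivAt Φ (DR x) x := by
    intro x hx
    have hV0' : HasDerivAt (fun y => V y 0) (Vd x 0) x := hasDerivAt_pi.1 (hVder x hx) 0
    have hV1' : HasDerivAt (fun y => V y 1) (Vd x 1) x := hasDerivAt_pi.1 (hVder x hx) 1
    have hVd0 : HasDerivAt (fun y => Vd y 0) (Vdd x 0) x := hasDerivAt_pi.1 (hVdder x hx) 0
    have hVd1 : HasDerivAt (fun y => Vd y 1) (Vdd x 1) x := hasDerivAt_pi.1 (hVdder x hx) 1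
    have hdot : HasDerivAt (fun y => V y ⬝ᵥ (Emat ν *ᵥ Vd y))
        (ν ^ 2 * (Vd x 0 * Vd x 0 + V x 0 * Vdd x 0) +
          (Vd x 1 * Vd x 1 + V x 1 * Vdd x 1)) x := by
      have heq : (fun y => V y ⬝ᵥ (Emat ν *ᵥ Vd y)) =
          fun y => ν ^ 2 * (V y 0 * Vd y 0) + V y 1 * Vd y 1 :=
        funext fun y => dotE ν (V y) (Vd y)
      rw [heq]
      exact ((hV0'.mul hVd0).const_mul (ν ^ 2)).add (hV1'.mul hVd1)
    have h := (hwtder x).mul hdot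
    have hval : V x ⬝ᵥ (Emat ν *ᵥ Vdd x) = V x ⬝ᵥ (B *ᵥ V x) - V x ⬝ᵥ ft x := by
      rw [hEVdd x, dotProduct_sub]
    have hdd : ν ^ 2 * (Vd x 0 * Vd x 0 + V x 0 * Vdd x 0) +
        (Vd x 1 * Vd x 1 + V x 1 * Vdd x 1) =
        Vd x ⬝ᵥ (Emat ν *ᵥ Vd x) + (V x ⬝ᵥ (B *ᵥ V x) - V x ⬝ᵥ ft x) := by
      rw [← hval, dotE, dotE]; ring
    rw [hΦdef]
    refine HasDerivAt.congr_deriv h ?_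
    rw [hdd]
    simp only [hDRdef, hRSdef, hAVdef]
    ring
  -- the master inequality on [0, R]
  have hRSc : ContinuousOn RS (Ici 0) := by
    rw [hRSdef]
    exact hwtc.continuousOn.mul ((continuousOn_const.mul
      (contOn_dot hVc (contOn_mulVec _ hVdc))).sub (contOn_dot hVc hftc))
  have hDRc : ContinuousOn DR (Ici 0) := by
    rw [hDRdef]
    exact hAVc.add hRSc
  have hΦbd : ∀ R : ℝ, 2 * β₀ * Φ R ≤ AV R := by
    intro R
    have h1 := eCS ν β₀ (V R) (Vd R)
    have h2 : β₀ ^ 2 * (V R ⬝ᵥ (Emat ν *ᵥ V R)) ≤ V R ⬝ᵥ (B *ᵥ V R) :=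
      le_trans (mul_le_mul_of_nonneg_left (eLeId ν hν2 (V R)) (sq_nonneg β₀)) (hB (V R))
    have h0 : (0:ℝ) ≤ Real.exp (2 * β * R) := (Real.exp_pos _).le
    have h3 : 2 * β₀ * (V R ⬝ᵥ (Emat ν *ᵥ Vd R)) ≤
        Vd R ⬝ᵥ (Emat ν *ᵥ Vd R) + V R ⬝ᵥ (B *ᵥ V R) := by linarith
    simp only [hΦdef, hAVdef]
    nlinarith [mul_le_mul_of_nonneg_left h3 h0]
  have hmaster : ∀ R : ℝ, 0 ≤ R →
      (β₀ - β) ^ 2 * ∫ x in (0:ℝ)..R, AV x ≤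
        (β₀ - β) * AV R + ∫ x in Ioi (0:ℝ), FT x := by
    intro R hR
    have hsub : uIcc (0:ℝ) R ⊆ Ici 0 := by
      rw [uIcc_of_le hR]; exact fun y hy => hy.1
    have hDRint : IntervalIntegrable DR volume 0 R := (hDRc.mono hsub).intervalIntegrable
    have hAVii : IntervalIntegrable AV volume 0 R := (hAVc.mono hsub).intervalIntegrable
    have hFTii : IntervalIntegrable FT volume 0 R := (hFTc.mono hsub).intervalIntegrable
    have hRSii : IntervalIntegrable RS volume 0 R := (hRSc.mono hsub).intervalIntegrable
    have hFTC : ∫ y in (0:ℝ)..R, DR y = Φ R - Φ 0 :=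
      intervalIntegral.integral_eq_sub_of_hasDerivAt (fun y hy => hΦder y (hsub hy)) hDRint
    have hΦ0 : Φ 0 = 0 := by
      rw [hΦdef]
      simp only [hV0, zero_dotProduct, mul_zero]
    have hsplitDR : ∫ y in (0:ℝ)..R, DR y =
        (∫ y in (0:ℝ)..R, AV y) + ∫ y in (0:ℝ)..R, RS y := by
      rw [← intervalIntegral.integral_add hAVii hRSii]
      simp only [hDRdef]
    have hmono : ∫ y in (0:ℝ)..R, (2 * β₀ * (β₀ - β)) * (-(RS y)) ≤
        ∫ y in (0:ℝ)..R, ((β₀ - β) * (β₀ + β) * AV y + FT y) := by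
      refine intervalIntegral.integral_mono_on hR ((hRSii.neg).const_mul _)
        ((hAVii.const_mul _).add hFTii) (fun y hy => ?_)
      have hk := key_pointwise β₀ β ν hβ₀ hβ0 hβ hν2 B hB (V y) (Vd y) (ft y)
      have h0 : (0:ℝ) ≤ Real.exp (2 * β * y) := (Real.exp_pos _).le
      simp only [hAVdef, hFTdef, hRSdef]
      linarith [mul_le_mul_of_nonneg_left hk h0]
    rw [intervalIntegral.integral_const_mul, intervalIntegral.integral_neg] at hmono
    rw [intervalIntegral.integral_add (hAVii.const_mul _) hFTii,
      intervalIntegral.integral_const_mul] at hmono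
    have hFTR : (∫ y in (0:ℝ)..R, FT y) ≤ ∫ x in Ioi (0:ℝ), FT x := by
      rw [intervalIntegral.integral_of_le hR]
      refine setIntegral_mono_set hFTint ?_ (HasSubset.Subset.eventuallyLE Ioc_subset_Ioi_self)
      filter_upwards with x
      exact hFTnn x
    have hIRE : (∫ y in (0:ℝ)..R, RS y) = Φ R - ∫ y in (0:ℝ)..R, AV y := by
      linarith [hFTC, hsplitDR, hΦ0]
    have h6 : (2 * β₀ * (β₀ - β)) * (-(∫ y in (0:ℝ)..R, RS y)) =
        (2 * β₀ * (β₀ - β)) * ((∫ y in (0:ℝ)..R, AV y) - Φ R) := by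
      rw [hIRE]; ring
    rw [h6] at hmono
    have h7 := mul_le_mul_of_nonneg_left (hΦbd R) hs.le
    nlinarith [hmono, h7, hFTR]
  -- pass to the limit R → ∞
  obtain ⟨IAV, hIAVdef⟩ : ∃ t : ℝ, t = ∫ x in Ioi (0:ℝ), AV x := ⟨_, rfl⟩
  have htend : Filter.Tendsto (fun R => ∫ x in (0:ℝ)..R, AV x) Filter.atTop (nhds IAV) := by
    rw [hIAVdef]
    exact intervalIntegral_tendsto_integral_Ioi 0 hAVint Filter.tendsto_id
  have hlim : (β₀ - β) ^ 2 * IAV ≤ ∫ x in Ioi (0:ℝ), FT x := by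
    by_contra hcon
    push_neg at hcon
    obtain ⟨ε, hεdef⟩ : ∃ t : ℝ, t = ((β₀ - β) ^ 2 * IAV - ∫ x in Ioi (0:ℝ), FT x) /
      ((β₀ - β) ^ 2 + (β₀ - β) + 1) := ⟨_, rfl⟩
    have hden : 0 < (β₀ - β) ^ 2 + (β₀ - β) + 1 := by positivity
    have hεpos : 0 < ε := by
      rw [hεdef]
      exact div_pos (by linarith) hden
    have hεq : ε * ((β₀ - β) ^ 2 + (β₀ - β) + 1) =
        (β₀ - β) ^ 2 * IAV - ∫ x in Ioi (0:ℝ), FT x := by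
      rw [hεdef]; field_simp
    have hev : ∀ᶠ R in Filter.atTop, IAV - ε < ∫ x in (0:ℝ)..R, AV x :=
      htend.eventually (lt_mem_nhds (show IAV - ε < IAV by linarith))
    have hfreq := freq_small hAVint hεpos
    obtain ⟨R, ⟨hR1, hR2⟩, hR3⟩ :=
      ((hfreq.and_eventually hev).and_eventually (Filter.eventually_ge_atTop 0)).exists
    have hm := hmaster R hR3
    have e1 : (β₀ - β) ^ 2 * (IAV - ε) ≤ (β₀ - β) ^ 2 * ∫ x in (0:ℝ)..R, AV x :=
      mul_le_mul_of_nonneg_left hR2.le (sq_nonneg _)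
    have e2 : (β₀ - β) * AV R ≤ (β₀ - β) * ε := mul_le_mul_of_nonneg_left hR1.le hs.le
    nlinarith [hεpos, sq_nonneg (β₀ - β), hs]
  -- final assembly
  have hAUle : ∀ x, AU x ≤ 2 * AV x + 2 * AG x := by
    intro x
    have h1 := quad_add_le (Emat ν) (eNonneg ν) (Vd x) (Gd x)
    have h2 := quad_add_le B hBpos (V x) (G x)
    have hU'eq : U' x = Vd x + Gd x := by
      simp only [hVddef]; abel
    have hUeq : U x = V x + G x := by
      simp only [hVdef]; abel
    have h0 : (0:ℝ) ≤ Real.exp (2 * β * x) := (Real.exp_pos _).le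
    simp only [hAUdef, hAVdef, hAGdef, hU'eq, hUeq]
    nlinarith [mul_le_mul_of_nonneg_left (add_le_add h1 h2) h0]
  have hAUI : (∫ x in Ioi (0:ℝ), AU x) ≤ 2 * IAV + 2 * (c₁ * (g ⬝ᵥ g)) := by
    have step : (∫ x in Ioi (0:ℝ), AU x) ≤ ∫ x in Ioi (0:ℝ), (2 * AV x + 2 * AG x) :=
      setIntegral_mono_on hAUint ((hAVint.const_mul 2).add (hAGint.const_mul 2))
        measurableSet_Ioi (fun x _ => hAUle x)
    have hsplit : (∫ x in Ioi (0:ℝ), (2 * AV x + 2 * AG x)) =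
        2 * (∫ x in Ioi (0:ℝ), AV x) + 2 * ∫ x in Ioi (0:ℝ), AG x := by
      rw [integral_add (hAVint.const_mul 2) (hAGint.const_mul 2),
        integral_const_mul, integral_const_mul]
    rw [hsplit, ← hIAVdef] at step
    nlinarith [hAGle, step]
  have hIAVnn : 0 ≤ IAV := by
    rw [hIAVdef]
    exact setIntegral_nonneg measurableSet_Ioi (fun x _ => hAVnn x)
  have hggnn : 0 ≤ g ⬝ᵥ g := dotnn g
  have hfinal2 : (β₀ - β) ^ 2 * ∫ x in Ioi (0:ℝ), AU x ≤ D * (F2 + g ⬝ᵥ g) := by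
    have h1 : (β₀ - β) ^ 2 ≤ β₀ ^ 2 := by nlinarith
    have e1 : (β₀ - β) ^ 2 * ∫ x in Ioi (0:ℝ), AU x ≤
        (β₀ - β) ^ 2 * (2 * IAV + 2 * (c₁ * (g ⬝ᵥ g))) :=
      mul_le_mul_of_nonneg_left hAUI (sq_nonneg _)
    have e2 : (β₀ - β) ^ 2 * (c₁ * (g ⬝ᵥ g)) ≤ β₀ ^ 2 * (c₁ * (g ⬝ᵥ g)) :=
      mul_le_mul_of_nonneg_right h1 (mul_nonneg hc₁.le hggnn)
    rw [hDdef]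
    nlinarith [hlim, hFTI, e1, e2, mul_nonneg (sq_nonneg c₁) hF2nn,
      mul_nonneg (mul_nonneg (sq_nonneg β₀) hc₁.le) hF2nn,
      mul_nonneg (sq_nonneg c₁) hggnn, hF2nn, hggnn]
  have hAUInn : 0 ≤ ∫ x in Ioi (0:ℝ), AU x :=
    setIntegral_nonneg measurableSet_Ioi (fun x _ => hAUnn x)
  have hgoal1 : (∫ x in Ioi (0:ℝ), AU x) ≤ D * (F2 + g ⬝ᵥ g) * ((β₀ - β)⁻¹) ^ 2 := by
    have hp : (0:ℝ) < (β₀ - β) ^ 2 := by positivity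
    rw [show D * (F2 + g ⬝ᵥ g) * ((β₀ - β)⁻¹) ^ 2 = D * (F2 + g ⬝ᵥ g) / (β₀ - β) ^ 2 by
      rw [div_eq_mul_inv, inv_pow]]
    rw [le_div_iff₀ hp]
    linarith [hfinal2]
  have hwn : wnormSq ν B β U U' = ∫ x in Ioi (0:ℝ), AU x := by
    rw [wnormSq, hAUdef]
  rw [hwn, ← hF2def]
  have hDF : (0:ℝ) ≤ D * (F2 + g ⬝ᵥ g) := by
    have : (0:ℝ) ≤ F2 + g ⬝ᵥ g := by linarith
    positivity
  calc Real.sqrt (∫ x in Ioi (0:ℝ), AU x)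
      ≤ Real.sqrt (D * (F2 + g ⬝ᵥ g) * ((β₀ - β)⁻¹) ^ 2) := Real.sqrt_le_sqrt hgoal1
    _ = Real.sqrt D * Real.sqrt (F2 + g ⬝ᵥ g) * (β₀ - β)⁻¹ := by
        rw [Real.sqrt_mul hDF, Real.sqrt_mul hD.le, Real.sqrt_sq (inv_nonneg.2 hs.le)]
    _ ≤ Real.sqrt D * (Real.sqrt F2 + Real.sqrt (g ⬝ᵥ g)) * (β₀ - β)⁻¹ := by
        have h1 := sqrt_add_le' hF2nn hggnn
        have h2 : (0:ℝ) ≤ Real.sqrt D := Real.sqrt_nonneg D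
        have h3 : (0:ℝ) ≤ (β₀ - β)⁻¹ := inv_nonneg.2 hs.le
        have h4 := mul_le_mul_of_nonneg_left h1 h2
        exact mul_le_mul_of_nonneg_right h4 h3
    _ = Real.sqrt D * (β₀ - β)⁻¹ * (Real.sqrt F2 + Real.sqrt (g ⬝ᵥ g)) := by ring
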